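/- For every twice continuously differentiable matrix field P : ℝ³ → ℝ^{3×3}, the identity −2·Curl((Curl(skew P))ᵀ) + Curl(tr((Curl(skew P))ᵀ)·𝟙) = 0 holds at every point of ℝ³. -/

import Mathlib

open Matrix

/-- Partial derivative in direction `j` of a scalar field on `ℝ³`. -/
noncomputable def pd (j : Fin 3) (f : (Fin 3 → ℝ) → ℝ) (x : Fin 3 → ℝ) : ℝ :=
  fderiv ℝ f x (Pi.single j 1)

/-- Gradient of a scalar field on `ℝ³`. -/
noncomputable def grad3 (f : (Fin 3 → ℝ) → ℝ) (x : Fin 3 → ℝ) : Fin 3 → ℝ :=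
  fun i => pd i f x

/-- Classical curl of a vector field on `ℝ³`. -/
noncomputable def vcurl (v : (Fin 3 → ℝ) → Fin 3 → ℝ) (x : Fin 3 → ℝ) : Fin 3 → ℝ :=
  ![pd 1 (fun y => v y 2) x - pd 2 (fun y => v y 1) x,
    pd 2 (fun y => v y 0) x - pd 0 (fun y => v y 2) x,
    pd 0 (fun y => v y 1) x - pd 1 (fun y => v y 0) x]

/-- Divergence of a vector field on `ℝ³`. -/
noncomputable def vdiv (v : (Fin 3 → ℝ) → Fin 3 → ℝ) (x : Fin 3 → ℝ) : ℝ :=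
  ∑ i, pd i (fun y => v y i) x

/-- Row-wise Curl of a matrix field on `ℝ³`: the `i`-th row of `mCurl P`
is the curl of the `i`-th row of `P`. -/
noncomputable def mCurl (P : (Fin 3 → ℝ) → Matrix (Fin 3) (Fin 3) ℝ) (x : Fin 3 → ℝ) :
    Matrix (Fin 3) (Fin 3) ℝ :=
  Matrix.of fun i j => vcurl (fun y => P y i) x j

/-- Jacobian matrix of a vector field on `ℝ³`. -/
noncomputable def jac (v : (Fin 3 → ℝ) → Fin 3 → ℝ) (x : Fin 3 → ℝ) :
    Matrix (Fin 3) (Fin 3) ℝ :=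
  Matrix.of fun i j => pd j (fun y => v y i) x

/-- Axial vector of a (skew-symmetric) `3 × 3` matrix: with `A 1 2 = -a₁`,
`A 2 0 = -a₂`, `A 0 1 = -a₃` (so `A 2 1 = a₁`, `A 0 2 = a₂`, `A 1 0 = a₃`). -/
def axl (A : Matrix (Fin 3) (Fin 3) ℝ) : Fin 3 → ℝ :=
  ![A 2 1, A 0 2, A 1 0]

/-- The skew-symmetric matrix `anti a` characterized by `(anti a) ⬝ v = a × v`. -/
def antiM (a : Fin 3 → ℝ) : Matrix (Fin 3) (Fin 3) ℝ :=
  !![0, -a 2, a 1; a 2, 0, -a 0; -a 1, a 0, 0]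

/-- Symmetric part of a matrix. -/
noncomputable def symM (X : Matrix (Fin 3) (Fin 3) ℝ) : Matrix (Fin 3) (Fin 3) ℝ :=
  (1 / 2 : ℝ) • (X + Xᵀ)

/-- Skew-symmetric part of a matrix. -/
noncomputable def skewM (X : Matrix (Fin 3) (Fin 3) ℝ) : Matrix (Fin 3) (Fin 3) ℝ :=
  (1 / 2 : ℝ) • (X - Xᵀ)

/-- Deviatoric (trace-free) part of a matrix. -/
noncomputable def devM (X : Matrix (Fin 3) (Fin 3) ℝ) : Matrix (Fin 3) (Fin 3) ℝ :=
  X - (Matrix.trace X / 3) • (1 : Matrix (Fin 3) (Fin 3) ℝ)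

/-- Frobenius inner product `⟨X, Y⟩ = tr (X Yᵀ)`. -/
noncomputable def minner (X Y : Matrix (Fin 3) (Fin 3) ℝ) : ℝ :=
  Matrix.trace (X * Yᵀ)

/-- Squared Frobenius norm. -/
noncomputable def mnormSq (X : Matrix (Fin 3) (Fin 3) ℝ) : ℝ :=
  minner X X

/-- Squared Euclidean norm of a vector in `ℝ³`. -/
def vnormSq (v : Fin 3 → ℝ) : ℝ :=
  ∑ i, (v i) ^ 2

section helpers
variable {f g : (Fin 3 → ℝ) → ℝ} {x : Fin 3 → ℝ}

lemma pd_neg (j : Fin 3) : pd j (fun y => -f y) x = -pd j f x := by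
  simp [pd, fderiv_neg]

lemma pd_sub (hf : DifferentiableAt ℝ f x) (hg : DifferentiableAt ℝ g x) (j : Fin 3) :
    pd j (fun y => f y - g y) x = pd j f x - pd j g x := by
  simp [pd, fderiv_fun_sub hf hg]

lemma pd_add (hf : DifferentiableAt ℝ f x) (hg : DifferentiableAt ℝ g x) (j : Fin 3) :
    pd j (fun y => f y + g y) x = pd j f x + pd j g x := by
  simp [pd, fderiv_fun_add hf hg]

lemma contDiff_pd (hf : ContDiff ℝ 2 f) (b : Fin 3) : ContDiff ℝ 1 (pd b f) := by
  have h : ContDiff ℝ 1 (fderiv ℝ f) := hf.fderiv_right (by norm_num)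
  exact h.clm_apply contDiff_const

lemma pd_comm (hf : ContDiff ℝ 2 f) (a b : Fin 3) (x : Fin 3 → ℝ) :
    pd a (pd b f) x = pd b (pd a f) x := by
  have hd : ∀ y, HasFDerivAt f (fderiv ℝ f y) y := fun y =>
    (hf.differentiable (by norm_num) y).hasFDerivAt
  have h1 : ContDiff ℝ 1 (fderiv ℝ f) := hf.fderiv_right (by norm_num)
  have h2 : HasFDerivAt (fderiv ℝ f) (fderiv ℝ (fderiv ℝ f) x) x :=
    ((h1.differentiable (by norm_num)) x).hasFDerivAt
  have hsymm := second_derivative_symmetric hd h2 (Pi.single a 1) (Pi.single b 1)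
  have key : ∀ (a b : Fin 3),
      pd a (pd b f) x = fderiv ℝ (fderiv ℝ f) x (Pi.single a 1) (Pi.single b 1) := by
    intro a b
    have hc : HasFDerivAt (fun y => fderiv ℝ f y (Pi.single b 1))
        (((fderiv ℝ f x).comp (0 : (Fin 3 → ℝ) →L[ℝ] (Fin 3 → ℝ))) +
          (fderiv ℝ (fderiv ℝ f) x).flip (Pi.single b 1)) x :=
      h2.clm_apply (hasFDerivAt_const _ _)
    have : pd a (pd b f) x = fderiv ℝ (fun y => fderiv ℝ f y (Pi.single b 1)) x (Pi.single a 1) := rfl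
    rw [this, hc.fderiv]
    simp
  rw [key a b, key b a, hsymm]
end helpers

set_option maxHeartbeats 1000000

/-- The identity −2 Curl((Curl(skew P))ᵀ) + Curl(tr((Curl(skew P))ᵀ)·𝟙) = 0. -/
theorem curl_curl_skew_identity
    (P : (Fin 3 → ℝ) → Matrix (Fin 3) (Fin 3) ℝ)
    (hP_diff : ∀ i j, ContDiff ℝ 2 (fun y => P y i j)) :
    ∀ x : Fin 3 → ℝ,
      (-2 : ℝ) • mCurl (fun y => (mCurl (fun z => skewM (P z)) y)ᵀ) x +
        mCurl (fun y =>
          Matrix.trace ((mCurl (fun z => skewM (P z)) y)ᵀ) •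
            (1 : Matrix (Fin 3) (Fin 3) ℝ)) x = 0 := by
  have hF2 : ∀ i j : Fin 3, ContDiff ℝ 2 (fun y => skewM (P y) i j) := by
    intro i j
    have h : (fun y => skewM (P y) i j) = fun y => (1 / 2 : ℝ) * (P y i j - P y j i) := by
      funext y; simp [skewM]
    rw [h]
    exact contDiff_const.mul ((hP_diff i j).sub (hP_diff j i))
  intro x
  have hFd : ∀ (b i j : Fin 3) (y : Fin 3 → ℝ),
      DifferentiableAt ℝ (pd b fun z => skewM (P z) i j) y := fun b i j y =>
    ((contDiff_pd (hF2 i j) b).differentiable (by norm_num)) y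
  have hzero : ∀ a : Fin 3, pd a (fun _ : Fin 3 → ℝ => (0 : ℝ)) x = 0 := by
    intro a; simp [pd]
  have hsub : ∀ a b c i1 j1 i2 j2 : Fin 3,
      pd a (fun y => pd b (fun z => skewM (P z) i1 j1) y -
        pd c (fun z => skewM (P z) i2 j2) y) x =
      pd a (pd b fun z => skewM (P z) i1 j1) x -
        pd a (pd c fun z => skewM (P z) i2 j2) x := by
    intro a b c i1 j1 i2 j2
    exact pd_sub (hFd b i1 j1 x) (hFd c i2 j2 x) a
  have htr : ∀ a : Fin 3,
      pd a (fun y =>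
        pd 1 (fun z => skewM (P z) 0 2) y - pd 2 (fun z => skewM (P z) 0 1) y +
          (pd 2 (fun z => skewM (P z) 1 0) y - pd 0 (fun z => skewM (P z) 1 2) y) +
          (pd 0 (fun z => skewM (P z) 2 1) y - pd 1 (fun z => skewM (P z) 2 0) y)) x =
      pd a (pd 1 fun z => skewM (P z) 0 2) x - pd a (pd 2 fun z => skewM (P z) 0 1) x +
        (pd a (pd 2 fun z => skewM (P z) 1 0) x - pd a (pd 0 fun z => skewM (P z) 1 2) x) +
        (pd a (pd 0 fun z => skewM (P z) 2 1) x - pd a (pd 1 fun z => skewM (P z) 2 0) x) := by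
    intro a
    have d1 : DifferentiableAt ℝ
        (fun y => pd 1 (fun z => skewM (P z) 0 2) y - pd 2 (fun z => skewM (P z) 0 1) y) x :=
      (hFd 1 0 2 x).sub (hFd 2 0 1 x)
    have d2 : DifferentiableAt ℝ
        (fun y => pd 2 (fun z => skewM (P z) 1 0) y - pd 0 (fun z => skewM (P z) 1 2) y) x :=
      (hFd 2 1 0 x).sub (hFd 0 1 2 x)
    have d3 : DifferentiableAt ℝ
        (fun y => pd 0 (fun z => skewM (P z) 2 1) y - pd 1 (fun z => skewM (P z) 2 0) y) x :=
      (hFd 0 2 1 x).sub (hFd 1 2 0 x)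
    rw [pd_add (d1.fun_add d2) d3, pd_add d1 d2, pd_sub (hFd 1 0 2 x) (hFd 2 0 1 x),
      pd_sub (hFd 2 1 0 x) (hFd 0 1 2 x), pd_sub (hFd 0 2 1 x) (hFd 1 2 0 x)]
  have hskwgen : ∀ a b i j : Fin 3,
      pd a (pd b fun z => skewM (P z) j i) x = -pd a (pd b fun z => skewM (P z) i j) x := by
    intro a b i j
    have h1 : (fun z => skewM (P z) j i) = fun z => -(skewM (P z) i j) := by
      funext z; simp [skewM]; ring
    have h2 : (pd b fun z => skewM (P z) j i) =
        fun y => -pd b (fun z => skewM (P z) i j) y := by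
      funext y; rw [h1]; exact pd_neg b
    rw [h2, pd_neg]
  have h10 : ∀ a b : Fin 3, pd a (pd b fun z => skewM (P z) 1 0) x =
      -pd a (pd b fun z => skewM (P z) 0 1) x := fun a b => hskwgen a b 0 1
  have h20 : ∀ a b : Fin 3, pd a (pd b fun z => skewM (P z) 2 0) x =
      -pd a (pd b fun z => skewM (P z) 0 2) x := fun a b => hskwgen a b 0 2
  have h21 : ∀ a b : Fin 3, pd a (pd b fun z => skewM (P z) 2 1) x =
      -pd a (pd b fun z => skewM (P z) 1 2) x := fun a b => hskwgen a b 1 2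
  have hdiag : ∀ a b i : Fin 3, pd a (pd b fun z => skewM (P z) i i) x = 0 := by
    intro a b i; have := hskwgen a b i i; linarith
  have c10 : ∀ i j : Fin 3, pd 1 (pd 0 fun z => skewM (P z) i j) x =
      pd 0 (pd 1 fun z => skewM (P z) i j) x := fun i j => pd_comm (hF2 i j) 1 0 x
  have c20 : ∀ i j : Fin 3, pd 2 (pd 0 fun z => skewM (P z) i j) x =
      pd 0 (pd 2 fun z => skewM (P z) i j) x := fun i j => pd_comm (hF2 i j) 2 0 x
  have c21 : ∀ i j : Fin 3, pd 2 (pd 1 fun z => skewM (P z) i j) x =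
      pd 1 (pd 2 fun z => skewM (P z) i j) x := fun i j => pd_comm (hF2 i j) 2 1 x
  refine Matrix.ext fun i j => ?_
  fin_cases i <;> fin_cases j <;>
    simp [mCurl, vcurl, Matrix.trace, Matrix.diag, Fin.sum_univ_three, Matrix.one_apply] <;>
    simp only [hsub, htr, hzero, hdiag, h10, h20, h21, c10, c20, c21] <;>
    ring
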